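/- Let D be a finite nonempty type and let B be a compact convex set of functions ψ' : D → ℝ such that every ψ' ∈ B is nonnegative and has positive total sum ∑_{d ∈ D} ψ'(d) > 0. Then every extreme point of the normalized set 𝒩(B) belongs to 𝒩(ext(B)); that is, ext(𝒩(B)) ⊆ 𝒩(ext(B)), where ext denotes the set of extreme points and 𝒩 is the normalization operator 𝒩(S) = { ψ' / (∑_{d ∈ D} ψ'(d)) : ψ' ∈ S }. -/

import Mathlib

/-- The normalization operator: each function in `S` is divided by its total sum. -/
noncomputable def normSet {D : Type*} [Fintype D] (S : Set (D → ℝ)) : Set (D → ℝ) :=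
  {g | ∃ ψ' ∈ S, g = (∑ d, ψ' d)⁻¹ • ψ'}

/-- For a compact convex set `B` of nonnegative functions with positive total sums,
every extreme point of `𝒩(B)` belongs to `𝒩(ext(B))`. -/
theorem extremePoints_normSet_subset
    (D : Type*) [Fintype D] [Nonempty D]
    (B : Set (D → ℝ)) (hB : Convex ℝ B) (hBcomp : IsCompact B)
    (hnonneg : ∀ ψ' ∈ B, ∀ d, 0 ≤ ψ' d)
    (hsum : ∀ ψ' ∈ B, 0 < ∑ d, ψ' d) :
    Set.extremePoints ℝ (normSet B) ⊆ normSet (Set.extremePoints ℝ B) := by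
  intro g hg
  obtain ⟨hgmem, hgext⟩ := hg
  obtain ⟨ψ', hψ'B, hgeq⟩ := hgmem
  have hs' : (0:ℝ) < ∑ d, ψ' d := hsum ψ' hψ'B
  have hsumg : ∑ d, g d = 1 := by
    subst hgeq
    simp only [Pi.smul_apply, smul_eq_mul, ← Finset.mul_sum]
    exact inv_mul_cancel₀ hs'.ne'
  -- the fiber of g inside B
  set F : Set (D → ℝ) := {ψ | ψ ∈ B ∧ ψ = (∑ d, ψ d) • g} with hF
  have hψ'F : ψ' ∈ F := by
    refine ⟨hψ'B, ?_⟩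
    rw [hgeq, smul_smul, mul_inv_cancel₀ hs'.ne', one_smul]
  have hFclosed : IsClosed F := by
    have h1 : IsClosed B := hBcomp.isClosed
    have h2 : IsClosed {ψ : D → ℝ | ψ = (∑ d, ψ d) • g} := by
      apply isClosed_eq continuous_id
      exact (continuous_finset_sum _ fun d _ => continuous_apply d).smul continuous_const
    exact h1.inter h2
  have hFcomp : IsCompact F := hBcomp.of_isClosed_subset hFclosed fun ψ hψ => hψ.1
  obtain ⟨φ, hφF, hφext⟩ := hFcomp.extremePoints_nonempty ⟨ψ', hψ'F⟩
  have hφB : φ ∈ B := hφF.1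
  have hsφ : (0:ℝ) < ∑ d, φ d := hsum φ hφB
  have hφg : (∑ d, φ d)⁻¹ • φ = g := by
    set c := ∑ d, φ d with hc
    have h : φ = c • g := hφF.2
    rw [h, smul_smul, inv_mul_cancel₀ hsφ.ne', one_smul]
  -- φ is an extreme point of B
  refine ⟨φ, ⟨hφB, ?_⟩, hφg.symm⟩
  intro x₁ hx₁ x₂ hx₂ hseg
  obtain ⟨a, b, ha, hb, hab, heq⟩ := hseg
  have hs₁ : (0:ℝ) < ∑ d, x₁ d := hsum x₁ hx₁
  have hs₂ : (0:ℝ) < ∑ d, x₂ d := hsum x₂ hx₂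
  set s₁ := ∑ d, x₁ d
  set s₂ := ∑ d, x₂ d
  have hsum_eq : ∑ d, φ d = a * s₁ + b * s₂ := by
    rw [← heq]
    simp only [Pi.add_apply, Pi.smul_apply, smul_eq_mul, Finset.sum_add_distrib,
      ← Finset.mul_sum]
    rfl
  have hs : (0:ℝ) < a * s₁ + b * s₂ := by rw [← hsum_eq]; exact hsφ
  -- normalized points
  have hn₁ : s₁⁻¹ • x₁ ∈ normSet B := ⟨x₁, hx₁, rfl⟩
  have hn₂ : s₂⁻¹ • x₂ ∈ normSet B := ⟨x₂, hx₂, rfl⟩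
  have hgseg : g ∈ openSegment ℝ (s₁⁻¹ • x₁) (s₂⁻¹ • x₂) := by
    refine ⟨a * s₁ / (a * s₁ + b * s₂), b * s₂ / (a * s₁ + b * s₂),
      div_pos (mul_pos ha hs₁) hs, div_pos (mul_pos hb hs₂) hs, ?_, ?_⟩
    · field_simp
    · rw [← hφg, hsum_eq, ← heq]
      match_scalars <;> field_simp <;> ring
  have he₁ := hgext hn₁ hn₂ hgseg
  have he₂ := hgext hn₂ hn₁ (by rw [openSegment_symm]; exact hgseg)
  have hx₁F : x₁ ∈ F := by
    refine ⟨hx₁, ?_⟩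
    rw [show (∑ d, x₁ d) = s₁ from rfl, ← he₁, smul_smul, mul_inv_cancel₀ hs₁.ne', one_smul]
  have hx₂F : x₂ ∈ F := by
    refine ⟨hx₂, ?_⟩
    rw [show (∑ d, x₂ d) = s₂ from rfl, ← he₂, smul_smul, mul_inv_cancel₀ hs₂.ne', one_smul]
  exact hφext hx₁F hx₂F ⟨a, b, ha, hb, hab, heq⟩
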